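/- arXiv:1904.12395 — 2 statements merged into one kernel-verified Lean document; each statement's English description precedes it below -/
import Mathlib

section
/- Let ℓ > 0 and let φ : ℝ → ℝ be differentiable with φ(0) = 1, with φ(x) → 0 as x → +∞ and as x → −∞, and integrand x ↦ (1/(2ℓ))·φ(x)² + (ℓ/2)·φ'(x)² integrable on ℝ. Then ∫_ℝ [ (1/(2ℓ))·φ(x)² + (ℓ/2)·φ'(x)² ] dx ≥ 1. -/
open MeasureTheory Filter Set

/-- Lower bound for the regularized crack surface energy: any differentiable profile
with `φ(0) = 1` decaying to 0 at ±∞ has total crack surface energy at least 1. -/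
theorem stmt3 (ℓ : ℝ) (hℓ : 0 < ℓ) (φ : ℝ → ℝ)
    (hdiff : Differentiable ℝ φ) (hφ0 : φ 0 = 1)
    (htop : Filter.Tendsto φ Filter.atTop (nhds 0))
    (hbot : Filter.Tendsto φ Filter.atBot (nhds 0))
    (hint : MeasureTheory.Integrable
      (fun x => (1 / (2 * ℓ)) * (φ x) ^ 2 + (ℓ / 2) * (deriv φ x) ^ 2)) :
    1 ≤ ∫ x : ℝ, ((1 / (2 * ℓ)) * (φ x) ^ 2 + (ℓ / 2) * (deriv φ x) ^ 2) := by
  set g : ℝ → ℝ := fun x => (1 / (2 * ℓ)) * (φ x) ^ 2 + (ℓ / 2) * (deriv φ x) ^ 2 with hg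
  set f : ℝ → ℝ := fun x => φ x * deriv φ x with hf
  have h2l : (0:ℝ) < 2 * ℓ := by linarith
  have key : ∀ x, |f x| ≤ g x := by
    intro x
    have e : g x = (φ x ^ 2 + ℓ ^ 2 * (deriv φ x) ^ 2) / (2 * ℓ) := by
      rw [hg]; field_simp
    rw [e, le_div_iff₀ h2l]
    rcases abs_cases (f x) with ⟨h1, _⟩ | ⟨h1, _⟩ <;> rw [h1] <;> rw [hf] <;> beta_reduce <;>
      nlinarith [sq_nonneg (φ x - ℓ * deriv φ x), sq_nonneg (φ x + ℓ * deriv φ x), hℓ]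
  have hmeas : AEStronglyMeasurable f volume :=
    (hdiff.continuous.measurable.mul (measurable_deriv φ)).aestronglyMeasurable
  have hI : Integrable f := hint.mono' hmeas (ae_of_all _ (fun x => by
    simpa [Real.norm_eq_abs] using key x))
  -- FTC on half-lines for F = φ²/2
  have hF : ∀ x, HasDerivAt (fun y => φ y ^ 2 / 2) (f x) x := by
    intro x
    have := ((hdiff x).hasDerivAt.fun_pow 2).div_const 2
    refine this.congr_deriv ?_
    rw [hf]; beta_reduce; ring
  have hFtop : Tendsto (fun y => φ y ^ 2 / 2) atTop (nhds 0) := by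
    have := (htop.pow 2).div_const 2
    simpa using this
  have hFbot : Tendsto (fun y => φ y ^ 2 / 2) atBot (nhds 0) := by
    have := (hbot.pow 2).div_const 2
    simpa using this
  have hItop : ∫ x in Ioi (0:ℝ), f x = 0 - φ 0 ^ 2 / 2 :=
    MeasureTheory.integral_Ioi_of_hasDerivAt_of_tendsto
      ((hF 0).continuousAt.continuousWithinAt) (fun x _ => hF x) hI.integrableOn hFtop
  have hIbot : ∫ x in Iic (0:ℝ), f x = φ 0 ^ 2 / 2 - 0 :=
    MeasureTheory.integral_Iic_of_hasDerivAt_of_tendsto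
      ((hF 0).continuousAt.continuousWithinAt) (fun x _ => hF x) hI.integrableOn hFbot
  have habs : Integrable (fun x => |f x|) := hI.abs
  have h1 : (1/2 : ℝ) ≤ ∫ x in Ioi (0:ℝ), |f x| := by
    calc (1/2:ℝ) = |∫ x in Ioi (0:ℝ), f x| := by
          rw [hItop, hφ0]; rw [show (0:ℝ) - 1^2/2 = -(1/2) by ring, abs_neg, abs_of_nonneg]
          norm_num
    _ ≤ ∫ x in Ioi (0:ℝ), |f x| := by
        simpa [Real.norm_eq_abs] using
          MeasureTheory.norm_integral_le_integral_norm (μ := volume.restrict (Ioi 0)) f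
  have h2 : (1/2 : ℝ) ≤ ∫ x in Iic (0:ℝ), |f x| := by
    calc (1/2:ℝ) = |∫ x in Iic (0:ℝ), f x| := by
          rw [hIbot, hφ0]; rw [show (1:ℝ)^2/2 - 0 = 1/2 by ring, abs_of_nonneg]
          norm_num
    _ ≤ ∫ x in Iic (0:ℝ), |f x| := by
        simpa [Real.norm_eq_abs] using
          MeasureTheory.norm_integral_le_integral_norm (μ := volume.restrict (Iic 0)) f
  have hsplit : (∫ x in Iic (0:ℝ), |f x|) + ∫ x in Ioi (0:ℝ), |f x| = ∫ x, |f x| :=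
    intervalIntegral.integral_Iic_add_Ioi habs.integrableOn habs.integrableOn
  have hmono : (∫ x, |f x|) ≤ ∫ x, g x :=
    integral_mono habs hint key
  linarith
end

section
/- Let λ, μ be real numbers, and define the 4×4 real matrices Cᵉ with rows (λ+2μ, λ, λ, 0), (λ, λ+2μ, λ, 0), (λ, λ, λ+2μ, 0), (0, 0, 0, μ), and P = (1/2)·the matrix with rows (1,1,0,0), (1,1,0,0), (0,0,0,0), (0,0,0,0). Let g, h, h′ be real scalars and set ℂ = g·Cᵉ·((h−1)·P + I) + h′·Cᵉ·P. Then for every natural number m and every real 4×m matrix B whose third row is identically zero, the m×m matrix Bᵀ·ℂ·B is symmetric. -/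
open Matrix

/-- In the plane-strain Amor model, the element stiffness product `Bᵀ·ℂ·B` is
symmetric whenever the third row of `B` vanishes, even though the tangent modulus
`ℂ = g·Cᵉ·((h−1)P + I) + h′·Cᵉ·P` is not symmetric. -/
theorem stmt6 (lam mu g h h' : ℝ) :
    let Ce : Matrix (Fin 4) (Fin 4) ℝ :=
      !![lam + 2 * mu, lam, lam, 0;
         lam, lam + 2 * mu, lam, 0;
         lam, lam, lam + 2 * mu, 0;
         0, 0, 0, mu]
    let P : Matrix (Fin 4) (Fin 4) ℝ :=
      (1 / 2 : ℝ) • !![1, 1, 0, 0; 1, 1, 0, 0; 0, 0, 0, 0; 0, 0, 0, 0]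
    let C : Matrix (Fin 4) (Fin 4) ℝ :=
      g • (Ce * ((h - 1) • P + 1)) + h' • (Ce * P)
    ∀ (m : ℕ) (B : Matrix (Fin 4) (Fin m) ℝ),
      (∀ j, B 2 j = 0) → (Bᵀ * C * B).IsSymm := by
  intro Ce P C m B hB
  rw [Matrix.IsSymm, ← Matrix.ext_iff]
  intro i j
  simp only [C, Ce, P, transpose_apply, mul_apply, Fin.sum_univ_four, hB,
    Matrix.add_apply, Matrix.smul_apply, Matrix.one_apply, Matrix.cons_val',
    Matrix.cons_val_zero, Matrix.cons_val_one, Matrix.head_cons,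
    Matrix.cons_val_fin_one, Matrix.empty_val', Matrix.cons_val_succ,
    Matrix.head_fin_const, Fin.isValue, smul_eq_mul, Matrix.cons_val, Matrix.of_apply]
  norm_num [Matrix.vecHead, Matrix.vecTail, Fin.ext_iff, show ((3:Fin 4):ℕ)=3 from rfl, show ((2:Fin 4):ℕ)=2 from rfl]
  ring
end
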